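/- If a ∈ K is such that the algebraic set Pre(N,a) = {(x,c) : f_c^N(x) = a} is nonsingular, then for every 1 ≤ M ≤ N, the algebraic set Pre(M,a) is nonsingular. -/

import Mathlib

open MvPolynomial

/-- The plane curve `Pre(N,a) : f_c^N(x) = a` is nonsingular: the defining polynomial and
its two partial derivatives have no common zero. -/
def PreNonsingular (K : Type*) [Field K] (a : K) (N : ℕ) : Prop :=
  ∀ x c : K,
    MvPolynomial.eval ![x, c]
        ((fun p : MvPolynomial (Fin 2) K => p ^ 2 + X 1)^[N] (X 0)) = a →
    ¬(MvPolynomial.eval ![x, c] (pderiv 0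
          ((fun p : MvPolynomial (Fin 2) K => p ^ 2 + X 1)^[N] (X 0))) = 0 ∧
      MvPolynomial.eval ![x, c] (pderiv 1
          ((fun p : MvPolynomial (Fin 2) K => p ^ 2 + X 1)^[N] (X 0))) = 0)

section Aux

variable {K : Type*} [Field K]

/-- The iterated polynomial `f_c^n(x)` as a polynomial in two variables. -/
noncomputable def PP (K : Type*) [Field K] (n : ℕ) : MvPolynomial (Fin 2) K :=
  (fun p : MvPolynomial (Fin 2) K => p ^ 2 + X 1)^[n] (X 0)

lemma PP_succ (n : ℕ) : PP K (n+1) = (PP K n) ^ 2 + X 1 := by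
  rw [PP, Function.iterate_succ_apply', ← PP]

lemma eval_PP (y c : K) (n : ℕ) :
    MvPolynomial.eval ![y, c] (PP K n) = (fun t : K => t ^ 2 + c)^[n] y := by
  induction n with
  | zero => simp [PP]
  | succ n ih =>
    rw [PP_succ, Function.iterate_succ_apply']
    simp [ih]

lemma eval_dx_zero (v : Fin 2 → K) :
    MvPolynomial.eval v (pderiv 0 (PP K 0)) = 1 := by
  simp [PP]

lemma eval_dc_zero (v : Fin 2 → K) :
    MvPolynomial.eval v (pderiv 1 (PP K 0)) = 0 := by
  simp [PP, pderiv_X_of_ne (by decide : (0 : Fin 2) ≠ 1)]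

lemma eval_dx_succ (v : Fin 2 → K) (n : ℕ) :
    MvPolynomial.eval v (pderiv 0 (PP K (n+1))) =
      2 * MvPolynomial.eval v (PP K n) * MvPolynomial.eval v (pderiv 0 (PP K n)) := by
  rw [PP_succ]
  simp only [sq, map_add, pderiv_mul, pderiv_X_of_ne (by decide : (1 : Fin 2) ≠ 0),
    map_mul, map_add, map_zero]
  ring

lemma eval_dc_succ (v : Fin 2 → K) (n : ℕ) :
    MvPolynomial.eval v (pderiv 1 (PP K (n+1))) =
      2 * MvPolynomial.eval v (PP K n) * MvPolynomial.eval v (pderiv 1 (PP K n)) + 1 := by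
  rw [PP_succ]
  simp only [sq, map_add, pderiv_mul, pderiv_X_self, map_mul, map_add, map_one]
  ring

/-- If the x-derivative vanishes at step `m`, some earlier iterate is zero. -/
lemma exists_iter_zero_of_dx_zero (h2 : (2 : K) ≠ 0) (x c : K) (m : ℕ)
    (hm : MvPolynomial.eval ![x, c] (pderiv 0 (PP K m)) = 0) :
    ∃ j < m, (fun t : K => t ^ 2 + c)^[j] x = 0 := by
  induction m with
  | zero => rw [eval_dx_zero] at hm; exact absurd hm one_ne_zero
  | succ m ih =>
    rw [eval_dx_succ] at hm
    rcases mul_eq_zero.mp hm with h1 | h1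
    · rcases mul_eq_zero.mp h1 with h1 | h1
      · exact absurd h1 h2
      · exact ⟨m, Nat.lt_succ_self m, by rwa [eval_PP] at h1⟩
    · obtain ⟨j, hj, hj0⟩ := ih h1
      exact ⟨j, hj.trans (Nat.lt_succ_self m), hj0⟩

/-- Conversely, if some iterate before step `m` vanishes, the x-derivative vanishes. -/
lemma dx_zero_of_exists (y c : K) (m j : ℕ) (hj : j < m)
    (h0 : (fun t : K => t ^ 2 + c)^[j] y = 0) :
    MvPolynomial.eval ![y, c] (pderiv 0 (PP K m)) = 0 := by
  induction m with
  | zero => omega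
  | succ m ih =>
    rw [eval_dx_succ]
    rcases Nat.lt_succ_iff_lt_or_eq.mp hj with hj' | rfl
    · rw [ih hj']; ring
    · rw [eval_PP, h0]; ring

/-- Chain rule for the c-derivative of the composite iterate. -/
lemma dc_chain (y c x : K) (k : ℕ) (hx : (fun t : K => t ^ 2 + c)^[k] y = x) (m : ℕ) :
    MvPolynomial.eval ![y, c] (pderiv 1 (PP K (m + k))) =
      MvPolynomial.eval ![x, c] (pderiv 0 (PP K m)) *
        MvPolynomial.eval ![y, c] (pderiv 1 (PP K k)) +
      MvPolynomial.eval ![x, c] (pderiv 1 (PP K m)) := by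
  induction m with
  | zero => simp [eval_dx_zero, eval_dc_zero]
  | succ m ih =>
    have he : MvPolynomial.eval ![y, c] (PP K (m + k)) =
        MvPolynomial.eval ![x, c] (PP K m) := by
      rw [eval_PP, eval_PP, ← hx, ← Function.iterate_add_apply]
    have hadd : m + 1 + k = (m + k) + 1 := by omega
    rw [hadd, eval_dc_succ, ih, he, eval_dx_succ, eval_dc_succ]
    ring

lemma fc_surj [IsAlgClosed K] (c : K) : Function.Surjective (fun t : K => t ^ 2 + c) := by
  intro w
  obtain ⟨z, hz⟩ := IsAlgClosed.exists_pow_nat_eq (w - c) (n := 2) (by norm_num)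
  exact ⟨z, by simp [hz]⟩

end Aux

lemma PreNonsingular_iff {K : Type*} [Field K] (a : K) (N : ℕ) :
    PreNonsingular K a N ↔ ∀ x c : K,
      MvPolynomial.eval ![x, c] (PP K N) = a →
      ¬(MvPolynomial.eval ![x, c] (pderiv 0 (PP K N)) = 0 ∧
        MvPolynomial.eval ![x, c] (pderiv 1 (PP K N)) = 0) := Iff.rfl

/-- If `Pre(N,a)` is nonsingular then `Pre(M,a)` is nonsingular for every `1 ≤ M ≤ N`. -/
theorem preimage_curve_nonsingular_down {K : Type*} [Field K] [IsAlgClosed K]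
    (hchar : (2 : K) ≠ 0) (a : K) (N : ℕ) (hN : 1 ≤ N)
    (h : PreNonsingular K a N) :
    ∀ M : ℕ, 1 ≤ M → M ≤ N → PreNonsingular K a M := by
  intro M hM hMN
  rw [PreNonsingular_iff] at h ⊢
  intro x c hxa ⟨hdx, hdc⟩
  set k := N - M with hk
  have hNk : M + k = N := by omega
  -- find a preimage `y` of `x` under `k` iterations of `f_c`
  obtain ⟨y, hy⟩ := (fc_surj c).iterate k x
  -- the point `(y, c)` lies on `Pre(N, a)`
  have heval : MvPolynomial.eval ![y, c] (PP K N) = a := by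
    rw [eval_PP, ← hNk, Function.iterate_add_apply, hy, ← eval_PP, hxa]
  refine h y c heval ⟨?_, ?_⟩
  · -- x-derivative vanishes at `(y, c)`
    obtain ⟨j, hj, hj0⟩ := exists_iter_zero_of_dx_zero hchar x c M hdx
    refine dx_zero_of_exists y c N (j + k) (by omega) ?_
    rw [Function.iterate_add_apply, hy, hj0]
  · -- c-derivative vanishes at `(y, c)`
    rw [← hNk, dc_chain y c x k hy M, hdx, hdc]
    ring
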